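/- arXiv:1004.1483 — 7 statements merged into one kernel-verified Lean document; each statement's English description precedes it below -/
import Mathlib

section
/- For every compact subgroup 𝒢 of GL(n,ℝ) (the group of invertible n×n real matrices with its standard topology), there exists a symmetric positive-definite real n×n matrix S such that for every G ∈ 𝒢 the matrix S G S⁻¹ is orthogonal, i.e. (S G S⁻¹)ᵀ (S G S⁻¹) = 1. -/
open Matrix

open MeasureTheory

open scoped MatrixOrder

attribute [local instance] Matrix.normedAddCommGroup Matrix.normedSpace

/-- For every compact subgroup `H` of `GL(n, ℝ)`, there exists a symmetric positive-definite
real `n × n` matrix `S` such that `S G S⁻¹` is orthogonal for every `G ∈ H`. -/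
theorem stmt_0 (n : ℕ) (H : Subgroup (GL (Fin n) ℝ))
    (hH : IsCompact (H : Set (GL (Fin n) ℝ))) :
    ∃ S : Matrix (Fin n) (Fin n) ℝ, S.PosDef ∧ Sᵀ = S ∧
      ∀ G ∈ H, (S * (G : Matrix (Fin n) (Fin n) ℝ) * S⁻¹)ᵀ *
        (S * (G : Matrix (Fin n) (Fin n) ℝ) * S⁻¹) = 1 := by
  classical
  haveI : CompactSpace ↥H := isCompact_iff_compactSpace.mp hH
  letI : MeasurableSpace ↥H := borel ↥H
  haveI : BorelSpace ↥H := ⟨rfl⟩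
  set μ : Measure ↥H := (Measure.haar (G := ↥H)).inv with hμ
  haveI : IsFiniteMeasure μ := CompactSpace.isFiniteMeasure
  set c : ↥H → Matrix (Fin n) (Fin n) ℝ :=
    fun g => ((g : GL (Fin n) ℝ) : Matrix (Fin n) (Fin n) ℝ) with hcdef
  have hc : Continuous c := Units.continuous_val.comp continuous_subtype_val
  set f : ↥H → Matrix (Fin n) (Fin n) ℝ := fun g => (c g)ᵀ * c g with hfdef
  have hf : Continuous f := (hc.matrix_transpose).mul hc
  letI : ContinuousENorm (Matrix (Fin n) (Fin n) ℝ) := SeminormedAddGroup.toContinuousENorm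
  have hfi : Integrable f μ := hf.integrable_of_hasCompactSupport
    (HasCompactSupport.of_compactSpace f)
  set P : Matrix (Fin n) (Fin n) ℝ := ∫ g, f g ∂μ with hPdef
  -- the matrices c g are invertible
  have hcinv : ∀ (g : ↥H) (x : Fin n → ℝ), x ≠ 0 → c g *ᵥ x ≠ 0 := by
    intro g x hx h0
    apply hx
    have : (((g : GL (Fin n) ℝ)⁻¹ : GL (Fin n) ℝ) : Matrix (Fin n) (Fin n) ℝ) * c g = 1 := by
      exact ((g : GL (Fin n) ℝ)).inv_mul
    calc x = ((((g : GL (Fin n) ℝ)⁻¹ : GL (Fin n) ℝ) : Matrix (Fin n) (Fin n) ℝ) * c g) *ᵥ x := by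
            rw [this, one_mulVec]
      _ = (((g : GL (Fin n) ℝ)⁻¹ : GL (Fin n) ℝ) : Matrix (Fin n) (Fin n) ℝ) *ᵥ (c g *ᵥ x) := by
            rw [mulVec_mulVec]
      _ = 0 := by rw [h0, mulVec_zero]
  -- transpose of P
  have hPsym : Pᵀ = P := by
    let tL : Matrix (Fin n) (Fin n) ℝ →ₗ[ℝ] Matrix (Fin n) (Fin n) ℝ :=
      { toFun := fun M => Mᵀ
        map_add' := fun _ _ => transpose_add _ _
        map_smul' := fun _ _ => transpose_smul _ _ }
    have := (LinearMap.toContinuousLinearMap tL).integral_comp_comm hfi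
    have h2 : ∀ g : ↥H, (f g)ᵀ = f g := by
      intro g; rw [hfdef]; simp [transpose_mul]
    calc Pᵀ = ∫ g, (f g)ᵀ ∂μ := this.symm
      _ = ∫ g, f g ∂μ := by simp_rw [h2]
      _ = P := rfl
  -- invariance of P
  have hinv : ∀ h : ↥H, (c h)ᵀ * P * c h = P := by
    intro h
    let L : Matrix (Fin n) (Fin n) ℝ →ₗ[ℝ] Matrix (Fin n) (Fin n) ℝ :=
      { toFun := fun M => (c h)ᵀ * M * c h
        map_add' := fun A B => by noncomm_ring
        map_smul' := fun r A => by
          simp [Matrix.mul_smul, Matrix.smul_mul] }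
    have hL := (LinearMap.toContinuousLinearMap L).integral_comp_comm hfi
    have h2 : ∀ g : ↥H, (c h)ᵀ * f g * c h = f (g * h) := by
      intro g
      have : c (g * h) = c g * c h := rfl
      rw [hfdef]; simp only [this, transpose_mul]; noncomm_ring
    calc (c h)ᵀ * P * c h = ∫ g, (c h)ᵀ * f g * c h ∂μ := hL.symm
      _ = ∫ g, f (g * h) ∂μ := by simp_rw [h2]
      _ = ∫ g, f g ∂μ := integral_mul_right_eq_self f h
      _ = P := rfl
  -- positive definiteness of P
  have hPherm : P.IsHermitian := by
    have : Pᴴ = Pᵀ := by ext i j; simp [conjTranspose_apply]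
    exact this.trans hPsym
  have hPpd : P.PosDef := by
    refine PosDef.of_dotProduct_mulVec_pos hPherm fun x hx => ?_
    have hstar : star x = x := by simp
    rw [hstar]
    let φ : Matrix (Fin n) (Fin n) ℝ →ₗ[ℝ] ℝ :=
      { toFun := fun M => x ⬝ᵥ M *ᵥ x
        map_add' := fun A B => by simp [add_mulVec]
        map_smul' := fun r A => by simp [smul_mulVec] }
    have hφ := (LinearMap.toContinuousLinearMap φ).integral_comp_comm hfi
    have h2 : ∀ g : ↥H, x ⬝ᵥ (f g) *ᵥ x = (c g *ᵥ x) ⬝ᵥ (c g *ᵥ x) := by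
      intro g
      rw [hfdef]
      rw [← mulVec_mulVec, dotProduct_mulVec, vecMul_transpose]
    have hpos : ∀ g : ↥H, 0 < (fun g => x ⬝ᵥ (f g) *ᵥ x) g := by
      intro g
      show 0 < x ⬝ᵥ f g *ᵥ x
      rw [h2 g]
      have hne := hcinv g x hx
      have hle : 0 ≤ (c g *ᵥ x) ⬝ᵥ (c g *ᵥ x) := by
        rw [dotProduct]
        exact Finset.sum_nonneg fun i _ => mul_self_nonneg _
      rcases hle.lt_or_eq with h | h
      · exact h
      · exact absurd ((dotProduct_self_eq_zero).mp h.symm) hne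
    have hint : Integrable (fun g => x ⬝ᵥ (f g) *ᵥ x) μ := by
      have : Continuous (fun g : ↥H => x ⬝ᵥ (f g) *ᵥ x) :=
        ((LinearMap.toContinuousLinearMap φ).continuous).comp hf
      exact this.integrable_of_hasCompactSupport (HasCompactSupport.of_compactSpace _)
    have : x ⬝ᵥ P *ᵥ x = ∫ g, x ⬝ᵥ (f g) *ᵥ x ∂μ := hφ.symm
    rw [this]
    rw [integral_pos_iff_support_of_nonneg (fun g => (hpos g).le) hint]
    have hsupp : Function.support (fun g => x ⬝ᵥ (f g) *ᵥ x) = Set.univ :=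
      Set.eq_univ_of_forall fun g => (hpos g).ne'
    rw [hsupp]
    exact isOpen_univ.measure_pos μ ⟨⟨1, H.one_mem⟩, trivial⟩
  -- the square root
  set S : Matrix (Fin n) (Fin n) ℝ := CFC.sqrt P with hSdef
  have hSps : S.PosSemidef := nonneg_iff_posSemidef.mp (CFC.sqrt_nonneg P)
  have hSS : S * S = P := CFC.sqrt_mul_sqrt_self P (nonneg_iff_posSemidef.mpr hPpd.posSemidef)
  have hSsym : Sᵀ = S := by
    have : Sᵀ = Sᴴ := by ext i j; simp [conjTranspose_apply]
    exact this.trans hSps.1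
  have hSpd : S.PosDef := by
    refine PosDef.of_dotProduct_mulVec_pos hSps.1 fun x hx => ?_
    rcases (hSps.dotProduct_mulVec_nonneg x).lt_or_eq with h | h
    · exact h
    · exfalso
      have h0 : S *ᵥ x = 0 := (hSps.dotProduct_mulVec_zero_iff x).mp h.symm
      have : star x ⬝ᵥ P *ᵥ x = 0 := by
        rw [← hSS, ← mulVec_mulVec, h0, mulVec_zero, dotProduct_zero]
      exact (hPpd.dotProduct_mulVec_pos hx).ne' this
  have hdet : IsUnit S.det := isUnit_iff_ne_zero.mpr hSpd.det_pos.ne'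
  have hS1 : S * S⁻¹ = 1 := mul_nonsing_inv S hdet
  have hS2 : S⁻¹ * S = 1 := nonsing_inv_mul S hdet
  refine ⟨S, hSpd, hSsym, fun G hG => ?_⟩
  set M : Matrix (Fin n) (Fin n) ℝ := (G : Matrix (Fin n) (Fin n) ℝ) with hMdef
  have key : Mᵀ * P * M = P := hinv ⟨G, hG⟩
  have e1 : (S * M * S⁻¹)ᵀ = S⁻¹ * Mᵀ * S := by
    rw [transpose_mul, transpose_mul, transpose_nonsing_inv, hSsym, Matrix.mul_assoc]
  calc (S * M * S⁻¹)ᵀ * (S * M * S⁻¹)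
      = S⁻¹ * (Mᵀ * (S * S) * M) * S⁻¹ := by rw [e1]; noncomm_ring
    _ = S⁻¹ * P * S⁻¹ := by rw [hSS, key]
    _ = S⁻¹ * (S * S) * S⁻¹ := by rw [hSS]
    _ = 1 := by rw [← Matrix.mul_assoc, hS2, Matrix.one_mul, hS1]
end

section
/- Let 𝒢 be a compact subgroup of GL(n,ℝ) and let P ⊆ ℝⁿ be a nonempty connected set such that G·x ∈ P for every G ∈ 𝒢 and x ∈ P, and such that the action is transitive on P: for all x, y ∈ P there exists G ∈ 𝒢 with G·x = y. Then the identity component 𝒞 of 𝒢 (the connected component of the identity matrix, which is a subgroup) is also transitive on P: for all x, y ∈ P there exists G ∈ 𝒞 with G·x = y. -/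
open Matrix

/-- If a compact subgroup `H ≤ GL(n, ℝ)` leaves a nonempty connected set `P ⊆ ℝⁿ` invariant
and acts transitively on it, then the identity component of `H` also acts transitively on `P`. -/
theorem stmt_1 (n : ℕ) (H : Subgroup (GL (Fin n) ℝ))
    (hH : IsCompact (H : Set (GL (Fin n) ℝ)))
    (P : Set (Fin n → ℝ)) (hPne : P.Nonempty) (hPconn : IsConnected P)
    (hinv : ∀ g ∈ H, ∀ x ∈ P, (g : Matrix (Fin n) (Fin n) ℝ).mulVec x ∈ P)
    (htrans : ∀ x ∈ P, ∀ y ∈ P, ∃ g ∈ H, (g : Matrix (Fin n) (Fin n) ℝ).mulVec x = y) :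
    ∀ x ∈ P, ∀ y ∈ P, ∃ g : H, g ∈ connectedComponent (1 : H) ∧
      ((g : GL (Fin n) ℝ) : Matrix (Fin n) (Fin n) ℝ).mulVec x = y := by
  intro x hx y hy
  haveI : CompactSpace H := isCompact_iff_compactSpace.mp hH
  by_contra hcon
  push_neg at hcon
  -- the evaluation map at `x`
  set ψ : H → (Fin n → ℝ) :=
    fun g => ((g : GL (Fin n) ℝ) : Matrix (Fin n) (Fin n) ℝ).mulVec x with hψdef
  have hψcont : Continuous ψ :=
    Continuous.matrix_mulVec (Units.continuous_val.comp continuous_subtype_val) continuous_const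
  have hψmul : ∀ a b : H, ψ (a * b)
      = ((a : GL (Fin n) ℝ) : Matrix (Fin n) (Fin n) ℝ).mulVec (ψ b) := by
    intro a b
    simp [hψdef, Matrix.mulVec_mulVec]
  have hmemP : ∀ g : H, ψ g ∈ P := fun g => hinv g g.2 x hx
  -- the set of elements sending `x` to `y` is compact and misses the identity component
  set T : Set H := {g : H | ψ g = y} with hTdef
  have hTcp : IsCompact T := (isClosed_eq hψcont continuous_const).isCompact
  -- find a clopen neighborhood `U` of `1` disjoint from `T`
  have hcover : T ⊆ ⋃ Z : {Z : Set H // IsClopen Z ∧ (1 : H) ∈ Z}, (↑Z : Set H)ᶜ := by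
    intro g hg
    have hgC : g ∉ connectedComponent (1 : H) := fun hC => hcon g hC hg
    rw [connectedComponent_eq_iInter_isClopen, Set.mem_iInter] at hgC
    push_neg at hgC
    obtain ⟨Z, hgZ⟩ := hgC
    exact Set.mem_iUnion.mpr ⟨Z, hgZ⟩
  obtain ⟨s, hs⟩ := hTcp.elim_finite_subcover
    (fun Z : {Z : Set H // IsClopen Z ∧ (1 : H) ∈ Z} => (↑Z : Set H)ᶜ)
    (fun Z => Z.2.1.compl.isOpen) hcover
  set U : Set H := ⋂ Z ∈ s, (↑Z : Set H) with hUdef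
  have hUclopen : IsClopen U := isClopen_biInter_finset fun Z _ => Z.2.1
  have h1U : (1 : H) ∈ U := Set.mem_biInter fun Z _ => Z.2.2
  have hUT : ∀ g ∈ U, g ∉ T := by
    intro g hgU hgT
    obtain ⟨Z, hZmem⟩ := Set.mem_iUnion.mp (hs hgT)
    obtain ⟨hZs, hgZ⟩ := Set.mem_iUnion.mp hZmem
    exact hgZ (Set.mem_iInter₂.mp hgU Z hZs)
  -- find an open subgroup `V ⊆ U`
  obtain ⟨V, hVU⟩ :=
    IsTopologicalGroup.exist_openSubgroup_sub_clopen_nhds_of_one hUclopen h1U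
  -- the orbit map onto `P`, a quotient map
  let φ : H → P := fun g => ⟨ψ g, hmemP g⟩
  have hφcont : Continuous φ := hψcont.subtype_mk _
  have hφsurj : Function.Surjective φ := by
    rintro ⟨w, hw⟩
    obtain ⟨g, hgH, hgw⟩ := htrans x hx w hw
    exact ⟨⟨g, hgH⟩, Subtype.ext hgw⟩
  have hφclosed : IsClosedMap φ := fun C hC => (hC.isCompact.image hφcont).isClosed
  have hφquot : Topology.IsQuotientMap φ := hφclosed.isQuotientMap hφcont hφsurj
  -- the `V`-orbit of `x` inside `P`
  set A : Set P := {w : P | ∃ v : H, v ∈ V ∧ ψ v = (w : Fin n → ℝ)} with hAdef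
  have hopen_pre : IsOpen (φ ⁻¹' A) := by
    rw [isOpen_iff_forall_mem_open]
    rintro g ⟨v₀, hv₀, hv₀x⟩
    refine ⟨(fun h => h * g) '' (V : Set H), ?_, isOpenMap_mul_right g _ V.isOpen, ?_⟩
    · rintro _ ⟨v, hv, rfl⟩
      refine ⟨v * v₀, mul_mem hv hv₀, ?_⟩
      show ψ (v * v₀) = ψ (v * g)
      rw [hψmul, hψmul]
      exact congrArg _ hv₀x
    · exact ⟨1, one_mem V, one_mul g⟩
  have hAopen : IsOpen A := hφquot.isOpen_preimage.mp hopen_pre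
  have hAclosed : IsClosed A := by
    have h1 : IsCompact (ψ '' (V : Set H)) := (V.isClosed.isCompact).image hψcont
    have hAeq : A = Subtype.val ⁻¹' (ψ '' (V : Set H)) := by
      ext w
      simp [hAdef, Set.mem_image]
    rw [hAeq]
    exact h1.isClosed.preimage continuous_subtype_val
  haveI : ConnectedSpace P := Subtype.connectedSpace hPconn
  have hAne : A.Nonempty := by
    refine ⟨⟨x, hx⟩, 1, one_mem V, ?_⟩
    simp [hψdef]
  have hAuniv : A = Set.univ := IsClopen.eq_univ ⟨hAclosed, hAopen⟩ hAne
  have hyA : (⟨y, hy⟩ : P) ∈ A := hAuniv ▸ Set.mem_univ _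
  obtain ⟨v, hvV, hvy⟩ := hyA
  exact hUT v (hVU hvV) hvy
end

section
/- Let 𝒢 be a compact subgroup of GL(n,ℝ) and S ⊆ ℝⁿ a nonempty compact convex set with G·S = S for every G ∈ 𝒢, such that 𝒢 acts transitively on the set of extreme points of S. Fix an extreme point ψ of S and define μ = ∫_𝒢 (G·ψ) dG, the barycenter with respect to the normalized Haar probability measure of 𝒢. Then: (a) μ ∈ S; (b) μ does not depend on the choice of the extreme point ψ; (c) G·μ = μ for all G ∈ 𝒢; and (d) μ is the unique such invariant point: any x ∈ S with G·x = x for all G ∈ 𝒢 equals μ. -/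
set_option maxHeartbeats 1000000
set_option synthInstance.maxHeartbeats 200000


open Matrix MeasureTheory

/-- Invariance and uniqueness of the maximally mixed state: the barycenter
`μ = ∫ G·ψ dG` (over the normalized Haar probability measure of a compact subgroup
`H ≤ GL(n,ℝ)` acting transitively on the extreme points of an invariant nonempty compact
convex set `S`) lies in `S`, is independent of the chosen extreme point `ψ`, is invariant
under `H`, and is the unique `H`-invariant point of `S`. -/
theorem stmt_2 (n : ℕ) (H : Subgroup (GL (Fin n) ℝ))
    (hH : IsCompact (H : Set (GL (Fin n) ℝ)))
    [MeasurableSpace ↥H] [BorelSpace ↥H]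
    (ν : Measure ↥H) [IsProbabilityMeasure ν] [ν.IsMulLeftInvariant]
    (S : Set (Fin n → ℝ)) (hSne : S.Nonempty) (hScomp : IsCompact S) (hSconv : Convex ℝ S)
    (hinv : ∀ g ∈ H, (fun x => (g : Matrix (Fin n) (Fin n) ℝ).mulVec x) '' S = S)
    (htrans : ∀ x ∈ S.extremePoints ℝ, ∀ y ∈ S.extremePoints ℝ,
      ∃ g ∈ H, (g : Matrix (Fin n) (Fin n) ℝ).mulVec x = y)
    (ψ : Fin n → ℝ) (hψ : ψ ∈ S.extremePoints ℝ)
    (μ : Fin n → ℝ)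
    (hμ : μ = ∫ g : ↥H, ((g : GL (Fin n) ℝ) : Matrix (Fin n) (Fin n) ℝ).mulVec ψ ∂ν) :
    μ ∈ S ∧
    (∀ ψ' ∈ S.extremePoints ℝ,
      (∫ g : ↥H, ((g : GL (Fin n) ℝ) : Matrix (Fin n) (Fin n) ℝ).mulVec ψ' ∂ν) = μ) ∧
    (∀ g ∈ H, (g : Matrix (Fin n) (Fin n) ℝ).mulVec μ = μ) ∧
    (∀ x ∈ S, (∀ g ∈ H, (g : Matrix (Fin n) (Fin n) ℝ).mulVec x = x) → x = μ) := by

  classical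
  have hCS : CompactSpace ↥H := isCompact_iff_compactSpace.mp hH
  set F : ↥H → Matrix (Fin n) (Fin n) ℝ :=
    fun g => ((g : GL (Fin n) ℝ) : Matrix (Fin n) (Fin n) ℝ) with hF
  have hFcont : Continuous F := Units.continuous_val.comp continuous_subtype_val
  have hcont : ∀ y : Fin n → ℝ, Continuous fun g : ↥H => (F g).mulVec y := fun y =>
    hFcont.matrix_mulVec continuous_const
  have hfmc : IsFiniteMeasureOnCompacts ν := ⟨fun _K _ => measure_lt_top ν _⟩
  have hint : ∀ y : Fin n → ℝ, Integrable (fun g : ↥H => (F g).mulVec y) ν := by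
    intro y
    apply (hcont y).integrable_of_hasCompactSupport
    exact IsCompact.of_isClosed_subset isCompact_univ (isClosed_tsupport _) (Set.subset_univ _)
  have hmem : ∀ (y : Fin n → ℝ), y ∈ S → ∀ g : ↥H, (F g).mulVec y ∈ S := by
    intro y hy g
    have := hinv (g : GL (Fin n) ℝ) g.2
    rw [← this]
    exact ⟨y, hy, rfl⟩
  have hψS : ψ ∈ S := hψ.1
  -- (a) membership
  have ha : μ ∈ S := by
    rw [hμ]
    exact hSconv.integral_mem hScomp.isClosed
      (Filter.Eventually.of_forall fun g => hmem ψ hψS g) (hint ψ)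
  -- multiplicativity of the action
  have hFmul : ∀ g h : ↥H, ∀ y : Fin n → ℝ,
      (F g).mulVec ((F h).mulVec y) = (F (g * h)).mulVec y := by
    intro g h y
    rw [Matrix.mulVec_mulVec]
    have : F (g * h) = F g * F h := by simp [hF]
    rw [this]
  -- (c) invariance
  have hc : ∀ g ∈ H, (g : Matrix (Fin n) (Fin n) ℝ).mulVec μ = μ := by
    intro g hg
    set g0 : ↥H := ⟨g, hg⟩ with hg0
    have hco : (g : Matrix (Fin n) (Fin n) ℝ) = F g0 := rfl
    rw [hco, hμ]
    let L : (Fin n → ℝ) →L[ℝ] (Fin n → ℝ) :=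
      LinearMap.toContinuousLinearMap (Matrix.mulVecLin (F g0))
    have hL : ∀ y, L y = (F g0).mulVec y := fun y => rfl
    calc (F g0).mulVec (∫ x : ↥H, (F x).mulVec ψ ∂ν)
        = L (∫ x : ↥H, (F x).mulVec ψ ∂ν) := rfl
      _ = ∫ x : ↥H, L ((F x).mulVec ψ) ∂ν := (L.integral_comp_comm (hint ψ)).symm
      _ = ∫ x : ↥H, (F (g0 * x)).mulVec ψ ∂ν := by
          simp only [hL, hFmul]
      _ = ∫ x : ↥H, (F x).mulVec ψ ∂ν := integral_mul_left_eq_self (fun x : ↥H => (F x).mulVec ψ) g0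
  -- right invariance of ν
  have hreg : ν.Regular := by infer_instance
  have hopos : ν.IsOpenPosMeasure :=
    isOpenPosMeasure_of_mulLeftInvariant_of_regular (μ := ν)
  have hHaar : ν.IsHaarMeasure := { hfmc, hopos, ‹ν.IsMulLeftInvariant› with }
  have hRI : ν.IsMulRightInvariant := by
    constructor
    intro g
    set ν' := Measure.map (· * g) ν with hν'
    have h1 : ν'.IsMulLeftInvariant := by infer_instance
    have h2 : IsProbabilityMeasure ν' := by
      refine ⟨?_⟩
      rw [hν', Measure.map_apply (measurable_mul_const g) MeasurableSet.univ]
      simp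
    have h3 : ν' = ν := Measure.isHaarMeasure_eq_of_isProbabilityMeasure ν' ν
    exact h3
  -- (b) independence
  have hb : ∀ ψ' ∈ S.extremePoints ℝ,
      (∫ g : ↥H, ((g : GL (Fin n) ℝ) : Matrix (Fin n) (Fin n) ℝ).mulVec ψ' ∂ν) = μ := by
    intro ψ' hψ'
    obtain ⟨g, hg, hgψ⟩ := htrans ψ hψ ψ' hψ'
    set g0 : ↥H := ⟨g, hg⟩ with hg0
    have key : ∀ x : ↥H, (F x).mulVec ψ' = (F (x * g0)).mulVec ψ := by
      intro x
      rw [← hgψ, ← hFmul x g0 ψ]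
    calc (∫ x : ↥H, (F x).mulVec ψ' ∂ν)
        = ∫ x : ↥H, (F (x * g0)).mulVec ψ ∂ν := by simp only [key]
      _ = ∫ x : ↥H, (F x).mulVec ψ ∂ν := integral_mul_right_eq_self (fun x : ↥H => (F x).mulVec ψ) g0
      _ = μ := hμ.symm
  refine ⟨ha, hb, hc, ?_⟩
  -- (d) uniqueness
  intro x hxS hxinv
  -- the barycenter map is linear and continuous
  let B : (Fin n → ℝ) →ₗ[ℝ] (Fin n → ℝ) :=
    { toFun := fun y => ∫ g : ↥H, (F g).mulVec y ∂ν
      map_add' := by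
        intro y z
        simp only [Matrix.mulVec_add]
        exact integral_add (hint y) (hint z)
      map_smul' := by
        intro c y
        simp only [Matrix.mulVec_smul, RingHom.id_apply]
        exact integral_smul c _ }
  have hBcont : Continuous B := B.continuous_of_finiteDimensional
  have hBdef : ∀ y, B y = ∫ g : ↥H, (F g).mulVec y ∂ν := fun y => rfl
  set T : Set (Fin n → ℝ) := B ⁻¹' {μ} with hT
  have hTclosed : IsClosed T := (isClosed_singleton).preimage hBcont
  have hTconv : Convex ℝ T := (convex_singleton μ).linear_preimage B
  have hExtT : S.extremePoints ℝ ⊆ T := by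
    intro y hy
    simpa [hT, hBdef] using hb y hy
  have hST : S ⊆ T := by
    rw [← closure_convexHull_extremePoints hScomp hSconv]
    exact closure_minimal (convexHull_min hExtT hTconv) hTclosed
  have hBx : B x = μ := hST hxS
  have hBx' : B x = x := by
    rw [hBdef]
    have : ∀ g : ↥H, (F g).mulVec x = x := fun g => hxinv (g : GL (Fin n) ℝ) g.2
    simp only [this]
    simp
  rw [← hBx', hBx]
end

section
/- Let K ⊆ ℝ^d (with its Euclidean norm, d ≥ 1) be a compact convex set with 0 in its topological interior, such that every point of the topological boundary of K is an extreme point of K. Suppose there is a subgroup 𝒢 of the orthogonal group O(d) with G·K = K for every G ∈ 𝒢, acting transitively on the extreme points of K: for all extreme points x, y of K there is G ∈ 𝒢 with G·x = y. Then there exists r > 0 such that K is the closed Euclidean ball of radius r centered at 0. -/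
open Matrix

section Aux
open RealInnerProductSpace

lemma norm_mulVec_orth {d : ℕ} (g : orthogonalGroup (Fin d) ℝ) (x y : EuclideanSpace ℝ (Fin d))
    (hyx : y = (g : Matrix (Fin d) (Fin d) ℝ).mulVec x) : ‖y‖ = ‖x‖ := by
  have hg : star (g : Matrix (Fin d) (Fin d) ℝ) * (g : Matrix (Fin d) (Fin d) ℝ) = 1 := g.2.1
  set A := (g : Matrix (Fin d) (Fin d) ℝ) with hA
  have key : ⟪y, y⟫ = ⟪x, x⟫ := by
    simp only [EuclideanSpace.inner_eq_star_dotProduct]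
    rw [hyx]
    show star (A.mulVec x) ⬝ᵥ (A.mulVec x) = star (x : Fin d → ℝ) ⬝ᵥ (x : Fin d → ℝ)
    have hs : star (A.mulVec x) = A.mulVec x := by simp [star]
    rw [hs, Matrix.dotProduct_mulVec, ← Matrix.mulVec_transpose,
      dotProduct_comm, Matrix.mulVec_mulVec]
    have h1 : Aᵀ * A = 1 := by simpa [Matrix.star_eq_conjTranspose] using hg
    rw [h1, Matrix.one_mulVec]
    simp [star, dotProduct_comm]
  rw [norm_eq_sqrt_real_inner y, norm_eq_sqrt_real_inner x, key]

lemma ray_frontier {d : ℕ} (K : Set (EuclideanSpace ℝ (Fin d)))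
    (hKc : IsCompact K) (h0 : (0 : EuclideanSpace ℝ (Fin d)) ∈ interior K)
    (u : EuclideanSpace ℝ (Fin d)) (hu : ‖u‖ = 1) :
    ∃ t > 0, t • u ∈ frontier K ∧ ∀ s ≥ (0:ℝ), s • u ∈ K → s ≤ t := by
  have hK0 : (0 : EuclideanSpace ℝ (Fin d)) ∈ K := interior_subset h0
  set S : Set ℝ := {s : ℝ | 0 ≤ s ∧ s • u ∈ K} with hS
  have hSne : S.Nonempty := ⟨0, le_refl 0, by simpa using hK0⟩
  obtain ⟨M, hM⟩ := hKc.isBounded.exists_norm_le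
  have hBdd : BddAbove S := by
    refine ⟨M, fun s hs => ?_⟩
    have := hM _ hs.2
    rwa [norm_smul, hu, mul_one, Real.norm_eq_abs, abs_of_nonneg hs.1] at this
  have hScl : IsClosed S := by
    have : S = {s : ℝ | 0 ≤ s} ∩ (fun s : ℝ => s • u) ⁻¹' K := rfl
    rw [this]
    exact isClosed_Ici.inter (hKc.isClosed.preimage (by continuity))
  set t := sSup S with ht
  have htS : t ∈ S := hScl.csSup_mem hSne hBdd
  have hub : ∀ s ≥ (0:ℝ), s • u ∈ K → s ≤ t := fun s hs hsK => le_csSup hBdd ⟨hs, hsK⟩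
  obtain ⟨ε, hε, hball⟩ := Metric.mem_nhds_iff.mp (mem_interior_iff_mem_nhds.mp h0)
  have htpos : 0 < t := by
    have h1 : (ε/2) ∈ S := by
      refine ⟨by positivity, hball ?_⟩
      simp [Metric.mem_ball, norm_smul, hu, abs_of_nonneg (le_of_lt (half_pos hε)),
        half_lt_self hε, abs_of_pos hε]
    linarith [le_csSup hBdd h1]
  refine ⟨t, htpos, ?_, hub⟩
  rw [frontier, hKc.isClosed.closure_eq]
  refine ⟨htS.2, fun hmem => ?_⟩
  obtain ⟨δ, hδ, hball2⟩ := Metric.mem_nhds_iff.mp (mem_interior_iff_mem_nhds.mp hmem)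
  have : (t + δ/2) ∈ S := by
    refine ⟨by linarith, hball2 ?_⟩
    have : (t + δ/2) • u - t • u = (δ/2) • u := by rw [← sub_smul]; ring_nf
    simp [Metric.mem_ball, dist_eq_norm, this, norm_smul, hu,
      abs_of_nonneg (le_of_lt (half_pos hδ)), half_lt_self hδ, abs_of_pos hδ]
  linarith [le_csSup hBdd this]

end Aux

/-- A compact convex set `K ⊆ ℝᵈ` with `0` in its interior, whose boundary points are all
extreme, and which is invariant under a subgroup of the orthogonal group acting transitively
on its extreme points, is a closed Euclidean ball centered at `0`. -/
theorem stmt_3 (d : ℕ) (hd : 1 ≤ d)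
    (K : Set (EuclideanSpace ℝ (Fin d)))
    (hKc : IsCompact K) (hKconv : Convex ℝ K)
    (h0 : (0 : EuclideanSpace ℝ (Fin d)) ∈ interior K)
    (hbd : frontier K ⊆ K.extremePoints ℝ)
    (H : Subgroup (orthogonalGroup (Fin d) ℝ))
    (hinv : ∀ g ∈ H,
      (fun x : EuclideanSpace ℝ (Fin d) =>
        (WithLp.toLp 2 ((g : Matrix (Fin d) (Fin d) ℝ).mulVec x) : EuclideanSpace ℝ (Fin d))) '' K = K)
    (htrans : ∀ x ∈ K.extremePoints ℝ, ∀ y ∈ K.extremePoints ℝ,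
      ∃ g ∈ H, (WithLp.toLp 2 ((g : Matrix (Fin d) (Fin d) ℝ).mulVec x) : EuclideanSpace ℝ (Fin d)) = y) :
    ∃ r > 0, K = Metric.closedBall 0 r := by
  have hK0 : (0 : EuclideanSpace ℝ (Fin d)) ∈ K := interior_subset h0
  set u0 : EuclideanSpace ℝ (Fin d) := EuclideanSpace.single ⟨0, hd⟩ (1:ℝ) with hu0def
  have hu0 : ‖u0‖ = 1 := by simp [hu0def, EuclideanSpace.norm_single]
  obtain ⟨t0, ht0pos, ht0f, _⟩ := ray_frontier K hKc h0 u0 hu0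
  set r := t0 with hrdef
  have hnorm_t0u0 : ‖t0 • u0‖ = r := by
    rw [norm_smul, hu0, mul_one, Real.norm_eq_abs, abs_of_pos ht0pos]
  -- every frontier point has norm r
  have hfr : ∀ x ∈ frontier K, ‖x‖ = r := by
    intro x hx
    obtain ⟨g, _, hgx⟩ := htrans x (hbd hx) (t0 • u0) (hbd ht0f)
    rw [← hnorm_t0u0]
    exact (norm_mulVec_orth g x (t0 • u0) (by rw [← hgx])).symm
  refine ⟨r, ht0pos, ?_⟩
  ext x
  rw [Metric.mem_closedBall, dist_zero_right]
  constructor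
  · intro hxK
    by_cases hx0 : x = 0
    · simp [hx0]; linarith
    · set u : EuclideanSpace ℝ (Fin d) := ‖x‖⁻¹ • x with hudef
      have hu : ‖u‖ = 1 := norm_smul_inv_norm hx0
      obtain ⟨t, htpos, htf, hub⟩ := ray_frontier K hKc h0 u hu
      have hxu : ‖x‖ • u = x := by
        rw [hudef, smul_smul, mul_inv_cancel₀ (norm_ne_zero_iff.2 hx0), one_smul]
      have h2 : ‖x‖ ≤ t := hub ‖x‖ (norm_nonneg x) (by rw [hxu]; exact hxK)
      have ht_r : t = r := by
        have := hfr _ htf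
        rwa [norm_smul, hu, mul_one, Real.norm_eq_abs, abs_of_pos htpos] at this
      linarith
  · intro hxr
    by_cases hx0 : x = 0
    · rw [hx0]; exact hK0
    · set u : EuclideanSpace ℝ (Fin d) := ‖x‖⁻¹ • x with hudef
      have hu : ‖u‖ = 1 := norm_smul_inv_norm hx0
      obtain ⟨t, htpos, htf, hub⟩ := ray_frontier K hKc h0 u hu
      have ht_r : t = r := by
        have := hfr _ htf
        rwa [norm_smul, hu, mul_one, Real.norm_eq_abs, abs_of_pos htpos] at this
      have htuK : t • u ∈ K := frontier_subset_iff_isClosed.mpr hKc.isClosed htf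
      have hxu : ‖x‖ • u = x := by
        rw [hudef, smul_smul, mul_inv_cancel₀ (norm_ne_zero_iff.2 hx0), one_smul]
      have hx_eq : x = (‖x‖ / t) • (t • u) := by
        rw [smul_smul, div_mul_cancel₀ _ (ne_of_gt htpos), hxu]
      rw [hx_eq]
      refine hKconv.smul_mem_of_zero_mem hK0 htuK ⟨by positivity, ?_⟩
      rw [div_le_one htpos, ht_r]
      exact hxr
end

section
/- Let d ≥ 1 and let B denote the closed unit ball of Euclidean space ℝ^d. For an affine map f : ℝ^d → ℝ the following are equivalent: (i) f(x) ∈ [0,1] for all x ∈ B, and there exist x₀, x₁ ∈ B with f(x₀) = 0 and f(x₁) = 1; (ii) there exists a unit vector ν ∈ ℝ^d such that f(x) = (1 + ⟨ν, x⟩)/2 for all x ∈ ℝ^d, where ⟨·,·⟩ is the Euclidean inner product. -/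
open RealInnerProductSpace

/-- An affine map `f : ℝᵈ → ℝ` is a tight effect on the closed unit ball (it takes values in
`[0,1]` there and attains both `0` and `1`) if and only if there is a unit vector `ν` with
`f x = (1 + ⟨ν, x⟩)/2` for all `x`. -/
theorem stmt_4 (d : ℕ) (hd : 1 ≤ d)
    (f : EuclideanSpace ℝ (Fin d) →ᵃ[ℝ] ℝ) :
    ((∀ x ∈ Metric.closedBall (0 : EuclideanSpace ℝ (Fin d)) 1, f x ∈ Set.Icc (0 : ℝ) 1) ∧
      (∃ x₀ ∈ Metric.closedBall (0 : EuclideanSpace ℝ (Fin d)) 1, f x₀ = 0) ∧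
      (∃ x₁ ∈ Metric.closedBall (0 : EuclideanSpace ℝ (Fin d)) 1, f x₁ = 1)) ↔
    (∃ ν : EuclideanSpace ℝ (Fin d), ‖ν‖ = 1 ∧ ∀ x, f x = (1 + ⟪ν, x⟫) / 2) := by
  set E := EuclideanSpace ℝ (Fin d)
  have hdec : ∀ x : E, f x = f.linear x + f 0 := by
    intro x
    have := f.map_vadd 0 x
    simpa [vadd_eq_add] using this
  constructor
  · rintro ⟨hb, ⟨x₀, hx₀, hf₀⟩, ⟨x₁, hx₁, hf₁⟩⟩
    obtain ⟨v, hv⟩ : ∃ v : E, ∀ x, ⟪v, x⟫ = f.linear x := by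
      refine ⟨(InnerProductSpace.toDual ℝ E).symm
        (LinearMap.toContinuousLinearMap f.linear), fun x => ?_⟩
      rw [InnerProductSpace.toDual_symm_apply]
      rfl
    set a := f 0 with ha
    have hx₀' : ‖x₀‖ ≤ 1 := by simpa using hx₀
    have hx₁' : ‖x₁‖ ≤ 1 := by simpa using hx₁
    have h1 : (1 : ℝ) ≤ ‖v‖ + a := by
      have := hdec x₁
      rw [hf₁, ← hv] at this
      have hle : ⟪v, x₁⟫ ≤ ‖v‖ := by
        calc ⟪v, x₁⟫ ≤ ‖v‖ * ‖x₁‖ := real_inner_le_norm v x₁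
        _ ≤ ‖v‖ * 1 := by
            exact mul_le_mul_of_nonneg_left hx₁' (norm_nonneg v)
        _ = ‖v‖ := mul_one _
      linarith
    have h0 : a - ‖v‖ ≤ 0 := by
      have := hdec x₀
      rw [hf₀, ← hv] at this
      have hle : -‖v‖ ≤ ⟪v, x₀⟫ := by
        have := abs_real_inner_le_norm v x₀
        have h2 : |⟪v, x₀⟫| ≤ ‖v‖ := by
          calc |⟪v, x₀⟫| ≤ ‖v‖ * ‖x₀‖ := abs_real_inner_le_norm v x₀
          _ ≤ ‖v‖ * 1 := mul_le_mul_of_nonneg_left hx₀' (norm_nonneg v)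
          _ = ‖v‖ := mul_one _
        linarith [neg_abs_le ⟪v, x₀⟫]
      linarith
    have hvne : v ≠ 0 := by
      intro h
      rw [h, norm_zero] at h1 h0
      linarith
    have hvpos : (0 : ℝ) < ‖v‖ := norm_pos_iff.mpr hvne
    set u : E := ‖v‖⁻¹ • v with hu
    have hun : ‖u‖ = 1 := by
      rw [hu, norm_smul, norm_inv, norm_norm, inv_mul_cancel₀ (ne_of_gt hvpos)]
    have hfu : f u = ‖v‖ + a := by
      rw [hdec u, ← hv, hu, real_inner_smul_right, real_inner_self_eq_norm_sq]
      field_simp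
    have hfnu : f (-u) = a - ‖v‖ := by
      rw [hdec (-u), ← hv, inner_neg_right, hu, real_inner_smul_right,
        real_inner_self_eq_norm_sq]
      field_simp
      ring
    have hub : u ∈ Metric.closedBall (0 : E) 1 := by simp [hun]
    have hnub : -u ∈ Metric.closedBall (0 : E) 1 := by simp [hun]
    have h1' := (hb u hub).2
    have h0' := (hb (-u) hnub).1
    rw [hfu] at h1'
    rw [hfnu] at h0'
    have hveq : ‖v‖ = 1 / 2 := by linarith
    have haeq : a = 1 / 2 := by linarith
    refine ⟨(2 : ℝ) • v, ?_, fun x => ?_⟩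
    · rw [norm_smul, hveq]; norm_num
    · rw [hdec x, ← hv, real_inner_smul_left, haeq]
      ring
  · rintro ⟨ν, hν, hf⟩
    have hinner : ⟪ν, ν⟫ = 1 := by
      rw [real_inner_self_eq_norm_sq, hν]; norm_num
    refine ⟨fun x hx => ?_, ⟨-ν, ?_, ?_⟩, ⟨ν, ?_, ?_⟩⟩
    · have hx' : ‖x‖ ≤ 1 := by simpa using hx
      have habs : |⟪ν, x⟫| ≤ 1 := by
        calc |⟪ν, x⟫| ≤ ‖ν‖ * ‖x‖ := abs_real_inner_le_norm ν x
        _ ≤ 1 := by rw [hν, one_mul]; exact hx'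
      rw [hf x]
      constructor
      · have := neg_abs_le ⟪ν, x⟫; linarith
      · have := le_abs_self ⟪ν, x⟫; linarith
    · simp [hν]
    · rw [hf (-ν), inner_neg_right, hinner]; norm_num
    · simp [hν]
    · rw [hf ν, hinner]; norm_num
end

section
/- Let d ≥ 1, let B denote the closed unit ball of Euclidean space ℝ^d, and let x ∈ ℝ^d with ‖x‖ = 1. If f : ℝ^d → ℝ is an affine map such that f(y) ∈ [0,1] for all y ∈ B, f(x) = 1, and f(y₀) = 0 for some y₀ ∈ B, then f(y) = (1 + ⟨x, y⟩)/2 for all y ∈ ℝ^d. (That is, for every point on the unit sphere there is exactly one tight effect assigning it the value 1.) -/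
open RealInnerProductSpace

/-- For every point `x` on the unit sphere of `ℝᵈ` there is exactly one tight effect assigning
it the value `1`: any affine map `f` with values in `[0,1]` on the closed unit ball, attaining
`0` somewhere on the ball and with `f x = 1`, must be `f y = (1 + ⟨x, y⟩)/2`. -/
theorem stmt_5 (d : ℕ) (hd : 1 ≤ d)
    (x : EuclideanSpace ℝ (Fin d)) (hx : ‖x‖ = 1)
    (f : EuclideanSpace ℝ (Fin d) →ᵃ[ℝ] ℝ)
    (hf01 : ∀ y ∈ Metric.closedBall (0 : EuclideanSpace ℝ (Fin d)) 1, f y ∈ Set.Icc (0 : ℝ) 1)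
    (hfx : f x = 1)
    (hf0 : ∃ y₀ ∈ Metric.closedBall (0 : EuclideanSpace ℝ (Fin d)) 1, f y₀ = 0) :
    ∀ y, f y = (1 + ⟪x, y⟫) / 2 := by
  set ℓ : EuclideanSpace ℝ (Fin d) →L[ℝ] ℝ := LinearMap.toContinuousLinearMap f.linear with hℓ
  set v : EuclideanSpace ℝ (Fin d) :=
    (InnerProductSpace.toDual ℝ (EuclideanSpace ℝ (Fin d))).symm ℓ with hvdef
  have hv : ∀ y : EuclideanSpace ℝ (Fin d), ⟪v, y⟫ = f.linear y := fun y =>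
    InnerProductSpace.toDual_symm_apply
  have hfy : ∀ y : EuclideanSpace ℝ (Fin d), f y = ⟪v, y⟫ + f 0 := by
    intro y
    have := f.map_vadd (0 : EuclideanSpace ℝ (Fin d)) y
    simp only [vadd_eq_add, add_zero] at this
    rw [this, hv]
  set a : ℝ := f 0 with ha
  obtain ⟨y₀, hy₀, hfy₀⟩ := hf0
  have hvne : v ≠ 0 := by
    intro h
    have h1 : f x = a := by rw [hfy]; simp [h]
    have h2 : f y₀ = a := by rw [hfy]; simp [h]
    rw [hfx] at h1; rw [hfy₀] at h2
    linarith
  have hvnorm : (0:ℝ) < ‖v‖ := norm_pos_iff.mpr hvne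
  have hmemp : (‖v‖⁻¹ • v) ∈ Metric.closedBall (0 : EuclideanSpace ℝ (Fin d)) 1 := by
    simp [norm_smul, abs_of_nonneg (inv_nonneg.mpr hvnorm.le), inv_mul_cancel₀ hvnorm.ne']
  have hmemn : (-(‖v‖⁻¹ • v)) ∈ Metric.closedBall (0 : EuclideanSpace ℝ (Fin d)) 1 := by
    simpa using hmemp
  have hinnerp : ⟪v, ‖v‖⁻¹ • v⟫ = ‖v‖ := by
    rw [real_inner_smul_right, real_inner_self_eq_norm_sq]
    field_simp
  have hmax : ‖v‖ + a ≤ 1 := by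
    have := (hf01 _ hmemp).2
    rw [hfy, hinnerp] at this
    linarith
  have hmin : 0 ≤ a - ‖v‖ := by
    have := (hf01 _ hmemn).1
    rw [hfy, inner_neg_right, hinnerp] at this
    linarith
  have hCS : ⟪v, x⟫ ≤ ‖v‖ := by
    have := real_inner_le_norm v x
    rwa [hx, mul_one] at this
  have hfx' : ⟪v, x⟫ + a = 1 := by rw [← hfy]; exact hfx
  have hy₀' : a ≤ ‖v‖ := by
    have h1 : ⟪v, y₀⟫ + a = 0 := by rw [← hfy]; exact hfy₀
    have h2 : -‖v‖ ≤ ⟪v, y₀⟫ := by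
      have h3 := abs_real_inner_le_norm v y₀
      have hy : ‖y₀‖ ≤ 1 := by simpa using hy₀
      have h4 : |⟪v, y₀⟫| ≤ ‖v‖ := le_trans h3 (by nlinarith)
      linarith [(abs_le.mp h4).1]
    linarith
  have haeq : a = ‖v‖ := le_antisymm hy₀' (by linarith)
  have hnv : ‖v‖ = 1/2 := by linarith
  have hva : ⟪v, x⟫ = 1/2 := by rw [haeq, hnv] at hfx'; linarith
  have hxv : x = (2:ℝ) • v := by
    have hn2v : ‖(2:ℝ) • v‖ = 1 := by
      rw [norm_smul, hnv]; norm_num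
    have hi : ⟪x, (2:ℝ) • v⟫ = 1 := by
      rw [real_inner_smul_right, real_inner_comm, hva]; norm_num
    exact (inner_eq_one_iff_of_norm_eq_one hx hn2v).mp hi
  intro y
  have hvx : v = (2:ℝ)⁻¹ • x := by
    rw [hxv, smul_smul]; norm_num
  rw [hfy, hvx, real_inner_smul_left, haeq, hnv]
  ring
end

section
/- Let 𝒢 ≤ GL(m,ℝ) and ℋ ≤ GL(n,ℝ) be compact subgroups, let S_A ⊆ ℝ^m and S_B ⊆ ℝⁿ be nonempty compact convex sets with G·S_A = S_A for all G ∈ 𝒢 and H·S_B = S_B for all H ∈ ℋ, and suppose 𝒢 acts transitively on the extreme points of S_A and ℋ acts transitively on the extreme points of S_B. Let μ_A = ∫_𝒢 (G·ψ) dG for some extreme point ψ of S_A (independent of the choice by transitivity), and similarly μ_B for S_B, the integrals taken with respect to the normalized Haar measures. Let Z be an m×n real matrix such that: (i) Z = Σ_k t_k · ψ_k φ_kᵀ for finitely many reals t_k with Σ_k t_k = 1, where each ψ_k is an extreme point of S_A and each φ_k an extreme point of S_B; and (ii) G Z Hᵀ = Z for all G ∈ 𝒢 and H ∈ ℋ.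 Then Z = μ_A μ_Bᵀ. -/
open Matrix MeasureTheory MeasureTheory.Measure

/-- On a compact topological group, any left-invariant Borel probability measure is also
right-invariant (by uniqueness of Haar measure). -/
theorem aux_rightInv {G : Type*} [Group G] [TopologicalSpace G] [IsTopologicalGroup G]
    [T2Space G] [CompactSpace G] [MeasurableSpace G] [BorelSpace G]
    (ν : Measure G) [IsProbabilityMeasure ν] [ν.IsMulLeftInvariant] :
    ν.IsMulRightInvariant := by
  haveI : IsOpenPosMeasure ν :=
    isOpenPosMeasure_of_mulLeftInvariant_of_compact Set.univ isCompact_univ (by simp)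
  haveI : ν.IsHaarMeasure := ⟨⟩
  constructor
  intro g
  set ν' := Measure.map (· * g) ν with hν'
  have hmeas : Measurable (· * g) := measurable_mul_const g
  haveI : IsProbabilityMeasure ν' := Measure.isProbabilityMeasure_map hmeas.aemeasurable
  haveI : ν'.IsMulLeftInvariant := by
    constructor
    intro g'
    rw [hν', Measure.map_map (measurable_const_mul g') hmeas]
    have : ((g' * ·) ∘ (· * g)) = ((· * g) ∘ (g' * ·)) := by
      funext x; simp [mul_assoc]
    rw [this, ← Measure.map_map hmeas (measurable_const_mul g'),
      map_mul_left_eq_self]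
  haveI : IsOpenPosMeasure ν' :=
    isOpenPosMeasure_of_mulLeftInvariant_of_compact Set.univ isCompact_univ (by simp)
  haveI : ν'.IsHaarMeasure := ⟨⟩
  exact isHaarMeasure_eq_of_isProbabilityMeasure ν' ν

theorem aux_cont {m : ℕ} (G : Subgroup (GL (Fin m) ℝ)) (ψ : Fin m → ℝ) :
    Continuous (fun g : ↥G => ((g : GL (Fin m) ℝ) : Matrix (Fin m) (Fin m) ℝ).mulVec ψ) := by
  have h1 : Continuous (fun g : ↥G => ((g : GL (Fin m) ℝ) : Matrix (Fin m) (Fin m) ℝ)) :=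
    Units.continuous_val.comp continuous_subtype_val
  apply continuous_pi
  intro i
  simp only [mulVec, dotProduct]
  exact continuous_finset_sum _ fun x _ =>
    (((continuous_apply x).comp ((continuous_apply i).comp h1)).mul continuous_const)

theorem aux_eval {m : ℕ} (G : Subgroup (GL (Fin m) ℝ)) (hG : IsCompact (G : Set (GL (Fin m) ℝ)))
    [MeasurableSpace ↥G] [BorelSpace ↥G] (νG : Measure ↥G) [IsProbabilityMeasure νG]
    (ψ : Fin m → ℝ) (i : Fin m) :
    (∫ g : ↥G, ((g : GL (Fin m) ℝ) : Matrix (Fin m) (Fin m) ℝ).mulVec ψ ∂νG) i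
      = ∫ g : ↥G, ((g : GL (Fin m) ℝ) : Matrix (Fin m) (Fin m) ℝ).mulVec ψ i ∂νG := by
  haveI : CompactSpace ↥G := isCompact_iff_compactSpace.mp hG
  have hint : Integrable
      (fun g : ↥G => ((g : GL (Fin m) ℝ) : Matrix (Fin m) (Fin m) ℝ).mulVec ψ) νG :=
    (aux_cont G ψ).integrable_of_hasCompactSupport ((isClosed_tsupport _).isCompact)
  exact ((ContinuousLinearMap.proj (R := ℝ) (φ := fun _ : Fin m => ℝ)
    i).integral_comp_comm hint).symm

theorem aux_avg {m : ℕ} (G : Subgroup (GL (Fin m) ℝ)) (hG : IsCompact (G : Set (GL (Fin m) ℝ)))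
    [MeasurableSpace ↥G] [BorelSpace ↥G] (νG : Measure ↥G) [IsProbabilityMeasure νG]
    [νG.IsMulRightInvariant] (ψ ψ' : Fin m → ℝ)
    (g₀ : GL (Fin m) ℝ) (hg₀ : g₀ ∈ G)
    (hEq : (g₀ : Matrix (Fin m) (Fin m) ℝ).mulVec ψ = ψ') (i : Fin m) :
    (∫ g : ↥G, ((g : GL (Fin m) ℝ) : Matrix (Fin m) (Fin m) ℝ).mulVec ψ' i ∂νG)
      = ∫ g : ↥G, ((g : GL (Fin m) ℝ) : Matrix (Fin m) (Fin m) ℝ).mulVec ψ i ∂νG := by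
  haveI : CompactSpace ↥G := isCompact_iff_compactSpace.mp hG
  have key := integral_mul_right_eq_self (μ := νG)
    (fun g : ↥G => ((g : GL (Fin m) ℝ) : Matrix (Fin m) (Fin m) ℝ).mulVec ψ i) ⟨g₀, hg₀⟩
  rw [← key]
  congr 1
  funext g
  simp only [← hEq, Subgroup.coe_mul, Units.val_mul, ← mulVec_mulVec]

theorem aux_conj {m n : ℕ} (A : Matrix (Fin m) (Fin m) ℝ) (B : Matrix (Fin n) (Fin n) ℝ)
    (x : Fin m → ℝ) (y : Fin n → ℝ) :
    A * vecMulVec x y * Bᵀ = vecMulVec (A *ᵥ x) (B *ᵥ y) := by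
  ext i j
  simp only [mul_apply, vecMulVec_apply, mulVec, dotProduct, transpose_apply]
  rw [Finset.sum_mul_sum, Finset.sum_comm]
  apply Finset.sum_congr rfl
  intro b _
  rw [Finset.sum_mul]
  apply Finset.sum_congr rfl
  intro a _
  ring

/-- If `Z` is a real `m × n` matrix that is an affine combination (coefficients summing to one)
of rank-one products `ψ φᵀ` of extreme points of invariant compact convex sets `S_A`, `S_B`,
and `Z` is invariant under `Z ↦ G Z Hᵀ` for all elements of compact transitive subgroups,
then `Z = μ_A μ_Bᵀ`, the product of the barycenters. -/
theorem stmt_8 (m n : ℕ)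
    (G : Subgroup (GL (Fin m) ℝ)) (H : Subgroup (GL (Fin n) ℝ))
    (hG : IsCompact (G : Set (GL (Fin m) ℝ))) (hH : IsCompact (H : Set (GL (Fin n) ℝ)))
    [MeasurableSpace ↥G] [BorelSpace ↥G] [MeasurableSpace ↥H] [BorelSpace ↥H]
    (νG : Measure ↥G) [IsProbabilityMeasure νG] [νG.IsMulLeftInvariant]
    (νH : Measure ↥H) [IsProbabilityMeasure νH] [νH.IsMulLeftInvariant]
    (SA : Set (Fin m → ℝ)) (hSAne : SA.Nonempty) (hSAc : IsCompact SA) (hSAconv : Convex ℝ SA)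
    (SB : Set (Fin n → ℝ)) (hSBne : SB.Nonempty) (hSBc : IsCompact SB) (hSBconv : Convex ℝ SB)
    (hinvA : ∀ g ∈ G, (fun x => (g : Matrix (Fin m) (Fin m) ℝ).mulVec x) '' SA = SA)
    (hinvB : ∀ h ∈ H, (fun y => (h : Matrix (Fin n) (Fin n) ℝ).mulVec y) '' SB = SB)
    (htransA : ∀ x ∈ SA.extremePoints ℝ, ∀ y ∈ SA.extremePoints ℝ,
      ∃ g ∈ G, (g : Matrix (Fin m) (Fin m) ℝ).mulVec x = y)
    (htransB : ∀ x ∈ SB.extremePoints ℝ, ∀ y ∈ SB.extremePoints ℝ,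
      ∃ h ∈ H, (h : Matrix (Fin n) (Fin n) ℝ).mulVec x = y)
    (ψA : Fin m → ℝ) (hψA : ψA ∈ SA.extremePoints ℝ)
    (μA : Fin m → ℝ)
    (hμA : μA = ∫ g : ↥G, ((g : GL (Fin m) ℝ) : Matrix (Fin m) (Fin m) ℝ).mulVec ψA ∂νG)
    (ψB : Fin n → ℝ) (hψB : ψB ∈ SB.extremePoints ℝ)
    (μB : Fin n → ℝ)
    (hμB : μB = ∫ h : ↥H, ((h : GL (Fin n) ℝ) : Matrix (Fin n) (Fin n) ℝ).mulVec ψB ∂νH)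
    (Z : Matrix (Fin m) (Fin n) ℝ)
    (hZrep : ∃ (k : ℕ) (t : Fin k → ℝ) (ψ : Fin k → (Fin m → ℝ)) (φ : Fin k → (Fin n → ℝ)),
      (∀ i, ψ i ∈ SA.extremePoints ℝ) ∧ (∀ i, φ i ∈ SB.extremePoints ℝ) ∧
      (∑ i, t i) = 1 ∧ Z = ∑ i, t i • vecMulVec (ψ i) (φ i))
    (hZinv : ∀ g ∈ G, ∀ h ∈ H,
      (g : Matrix (Fin m) (Fin m) ℝ) * Z * (h : Matrix (Fin n) (Fin n) ℝ)ᵀ = Z) :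
    Z = vecMulVec μA μB := by
  obtain ⟨k, t, ψ, φ, hψ, hφ, hsum, hZ⟩ := hZrep
  haveI : CompactSpace ↥G := isCompact_iff_compactSpace.mp hG
  haveI : CompactSpace ↥H := isCompact_iff_compactSpace.mp hH
  haveI : νG.IsMulRightInvariant := aux_rightInv νG
  haveI : νH.IsMulRightInvariant := aux_rightInv νH
  -- each averaged extreme point gives the barycenter
  have hA : ∀ (l : Fin k) (i : Fin m),
      (∫ g : ↥G, ((g : GL (Fin m) ℝ) : Matrix (Fin m) (Fin m) ℝ).mulVec (ψ l) i ∂νG) = μA i := by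
    intro l i
    obtain ⟨g₀, hg₀, hEq⟩ := htransA ψA hψA (ψ l) (hψ l)
    rw [aux_avg G hG νG ψA (ψ l) g₀ hg₀ hEq i, hμA, aux_eval G hG νG ψA i]
  have hB : ∀ (l : Fin k) (j : Fin n),
      (∫ h : ↥H, ((h : GL (Fin n) ℝ) : Matrix (Fin n) (Fin n) ℝ).mulVec (φ l) j ∂νH) = μB j := by
    intro l j
    obtain ⟨h₀, hh₀, hEq⟩ := htransB ψB hψB (φ l) (hφ l)
    rw [aux_avg H hH νH ψB (φ l) h₀ hh₀ hEq j, hμB, aux_eval H hH νH ψB j]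
  -- invariant representation
  have hZ' : ∀ (g : ↥G) (h : ↥H), Z = ∑ l, t l •
      vecMulVec (((g : GL (Fin m) ℝ) : Matrix (Fin m) (Fin m) ℝ) *ᵥ ψ l)
        (((h : GL (Fin n) ℝ) : Matrix (Fin n) (Fin n) ℝ) *ᵥ φ l) := by
    intro g h
    conv_lhs => rw [← hZinv (g : GL (Fin m) ℝ) g.2 (h : GL (Fin n) ℝ) h.2, hZ]
    rw [Matrix.mul_sum, Matrix.sum_mul]
    refine Finset.sum_congr rfl fun l _ => ?_
    rw [Matrix.mul_smul, Matrix.smul_mul, aux_conj]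
  ext i j
  have hval : ∀ (g : ↥G) (h : ↥H), Z i j = ∑ l, t l *
      (((g : GL (Fin m) ℝ) : Matrix (Fin m) (Fin m) ℝ) *ᵥ ψ l) i *
      (((h : GL (Fin n) ℝ) : Matrix (Fin n) (Fin n) ℝ) *ᵥ φ l) j := by
    intro g h
    conv_lhs => rw [hZ' g h]
    simp only [Matrix.sum_apply, Matrix.smul_apply, vecMulVec_apply, smul_eq_mul, mul_assoc]
  have intA : ∀ l, Integrable
      (fun g : ↥G => (((g : GL (Fin m) ℝ) : Matrix (Fin m) (Fin m) ℝ) *ᵥ ψ l) i) νG :=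
    fun l => (((continuous_apply i).comp (aux_cont G (ψ l)))).integrable_of_hasCompactSupport
      ((isClosed_tsupport _).isCompact)
  have intB : ∀ l, Integrable
      (fun h : ↥H => (((h : GL (Fin n) ℝ) : Matrix (Fin n) (Fin n) ℝ) *ᵥ φ l) j) νH :=
    fun l => (((continuous_apply j).comp (aux_cont H (φ l)))).integrable_of_hasCompactSupport
      ((isClosed_tsupport _).isCompact)
  -- integrate out h
  have step1 : ∀ g : ↥G, Z i j = ∑ l, t l *
      (((g : GL (Fin m) ℝ) : Matrix (Fin m) (Fin m) ℝ) *ᵥ ψ l) i * μB j := by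
    intro g
    have h0 : Z i j = ∫ _ : ↥H, Z i j ∂νH := by simp
    rw [h0]
    calc (∫ _ : ↥H, Z i j ∂νH)
        = ∫ h : ↥H, ∑ l, t l *
            (((g : GL (Fin m) ℝ) : Matrix (Fin m) (Fin m) ℝ) *ᵥ ψ l) i *
            (((h : GL (Fin n) ℝ) : Matrix (Fin n) (Fin n) ℝ) *ᵥ φ l) j ∂νH :=
          integral_congr_ae (Filter.Eventually.of_forall fun h => hval g h)
      _ = ∑ l, ∫ h : ↥H, t l *
            (((g : GL (Fin m) ℝ) : Matrix (Fin m) (Fin m) ℝ) *ᵥ ψ l) i *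
            (((h : GL (Fin n) ℝ) : Matrix (Fin n) (Fin n) ℝ) *ᵥ φ l) j ∂νH :=
          integral_finset_sum _ (fun l _ => (intB l).const_mul _)
      _ = ∑ l, t l * (((g : GL (Fin m) ℝ) : Matrix (Fin m) (Fin m) ℝ) *ᵥ ψ l) i * μB j := by
          refine Finset.sum_congr rfl fun l _ => ?_
          rw [integral_const_mul, hB l j]
  -- integrate out g
  have step2 : Z i j = μA i * μB j := by
    have h0 : Z i j = ∫ _ : ↥G, Z i j ∂νG := by simp
    rw [h0]
    calc (∫ _ : ↥G, Z i j ∂νG)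
        = ∫ g : ↥G, ∑ l, t l *
            (((g : GL (Fin m) ℝ) : Matrix (Fin m) (Fin m) ℝ) *ᵥ ψ l) i * μB j ∂νG :=
          integral_congr_ae (Filter.Eventually.of_forall fun g => step1 g)
      _ = ∑ l, ∫ g : ↥G, t l *
            (((g : GL (Fin m) ℝ) : Matrix (Fin m) (Fin m) ℝ) *ᵥ ψ l) i * μB j ∂νG :=
          integral_finset_sum _ (fun l _ => (((intA l).const_mul (t l)).mul_const (μB j)))
      _ = ∑ l, t l * μA i * μB j := by
          refine Finset.sum_congr rfl fun l _ => ?_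
          rw [integral_mul_const, integral_const_mul, hA l i]
      _ = μA i * μB j := by
          rw [← Finset.sum_mul, ← Finset.sum_mul, hsum, one_mul]
  rw [step2, vecMulVec_apply]
end
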